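/- Let m ≥ 1 be an integer, let s > max{2(m−1), m} + 1/2, and let ψ ∈ L^{2,s}(ℝ) satisfy ψ̂(k) = O(k^m) as k → 0, i.e. there exist δ > 0 and C ≥ 0 with |ψ̂(k)| ≤ C|k|^m for all 0 < |k| < δ. Then ∫_ℝ x^j ψ(x) dx = 0 for every j = 0, 1, …, m−1. -/

import Mathlib

open MeasureTheory Filter Finset
open scoped ENNReal

/-- Membership in the weighted space `L^{2,s}(ℝ)`. -/
def MemL2s (s : ℝ) (ψ : ℝ → ℂ) : Prop :=
  Measurable ψ ∧ Integrable (fun x : ℝ => (1 + x ^ 2) ^ s * ‖ψ x‖ ^ 2)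

/-- The Fourier transform `ψ̂(k) = (2π)^{-1/2} ∫ e^{-ikx} ψ(x) dx`. -/
noncomputable def FT (ψ : ℝ → ℂ) (k : ℝ) : ℂ :=
  (((2 * Real.pi) ^ (-(1 : ℝ) / 2) : ℝ) : ℂ) *
    ∫ x : ℝ, Complex.exp (-(Complex.I * (k : ℂ) * (x : ℂ))) * ψ x

lemma exp_taylor_bd {z : ℂ} (hz : ‖Complex.exp z‖ ≤ 1) {n : ℕ} (hn : 0 < n) :
    ‖Complex.exp z - ∑ i ∈ Finset.range n, z ^ i / i.factorial‖ ≤ (n + 2) * ‖z‖ ^ n := by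
  rcases le_or_gt ‖z‖ 1 with h | h
  · have h1 := Complex.exp_bound (x := z) (by exact h) hn
    refine h1.trans ?_
    rw [mul_comm]
    gcongr
    have h2 : (1:ℝ) ≤ (n.factorial * n : ℝ) := by
      have := n.factorial_pos
      have h3 : (1:ℕ) ≤ n.factorial * n := Nat.one_le_iff_ne_zero.2 (by positivity)
      exact_mod_cast h3
    calc ((n.succ : ℝ) * (n.factorial * n : ℝ)⁻¹) ≤ (n.succ : ℝ) * 1 := by
          gcongr
          exact inv_le_one_of_one_le₀ h2
      _ ≤ (n:ℝ) + 2 := by push_cast; linarith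
  · have hsum : ‖∑ i ∈ Finset.range n, z ^ i / i.factorial‖ ≤ (n:ℝ) * ‖z‖ ^ n := by
      refine (norm_sum_le _ _).trans ?_
      have hb : ∀ i ∈ Finset.range n, ‖z ^ i / (i.factorial : ℂ)‖ ≤ ‖z‖ ^ n := by
        intro i hi
        rw [norm_div, norm_pow]
        have h4 : (1:ℝ) ≤ ‖(i.factorial : ℂ)‖ := by
          rw [Complex.norm_natCast]; exact_mod_cast i.factorial_pos
        calc ‖z‖ ^ i / ‖(i.factorial : ℂ)‖ ≤ ‖z‖ ^ i := by
              apply div_le_self (by positivity) h4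
          _ ≤ ‖z‖ ^ n := pow_le_pow_right₀ h.le (Finset.mem_range.1 hi).le
      calc ∑ i ∈ Finset.range n, ‖z ^ i / (i.factorial : ℂ)‖
          ≤ ∑ _i ∈ Finset.range n, ‖z‖ ^ n := Finset.sum_le_sum hb
        _ = (n:ℝ) * ‖z‖ ^ n := by simp [Finset.sum_const, mul_comm]
    have h1 : (1:ℝ) ≤ ‖z‖ ^ n := one_le_pow₀ h.le
    calc ‖Complex.exp z - ∑ i ∈ Finset.range n, z ^ i / i.factorial‖
        ≤ ‖Complex.exp z‖ + ‖∑ i ∈ Finset.range n, z ^ i / i.factorial‖ := norm_sub_le _ _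
      _ ≤ 1 + (n:ℝ) * ‖z‖ ^ n := add_le_add hz hsum
      _ ≤ (n + 2) * ‖z‖ ^ n := by nlinarith [pow_nonneg (norm_nonneg z) n]

lemma integrable_weight {u : ℝ} (hu : u < -(1/2)) :
    MeasureTheory.Integrable (fun x : ℝ => (1 + x ^ 2) ^ u) := by
  have h := integrable_rpow_neg_one_add_norm_sq (E := ℝ) (μ := volume) (r := -2 * u)
    (by simp [Module.finrank_self]; linarith)
  refine h.congr (Eventually.of_forall fun x => ?_)
  simp only [Real.norm_eq_abs, sq_abs]
  norm_num

lemma abs_pow_le (x : ℝ) {j m : ℕ} (hjm : j ≤ m) :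
    |x| ^ j ≤ (1 + x ^ 2) ^ ((m:ℝ)/2) := by
  have hb : (0:ℝ) < 1 + x ^ 2 := by positivity
  apply le_of_pow_le_pow_left₀ (n := 2) two_ne_zero (by positivity)
  have e1 : (|x| ^ j) ^ 2 = (x ^ 2) ^ j := by
    rw [← pow_mul, mul_comm j 2, pow_mul, sq_abs]
  have e2 : ((1 + x ^ 2) ^ ((m:ℝ)/2)) ^ 2 = (1 + x ^ 2) ^ m := by
    rw [← Real.rpow_natCast ((1 + x ^ 2) ^ ((m:ℝ)/2)) 2, ← Real.rpow_mul hb.le]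
    norm_num
  rw [e1, e2]
  calc (x ^ 2) ^ j ≤ (1 + x ^ 2) ^ j := by
        gcongr <;> nlinarith [sq_nonneg x]
    _ ≤ (1 + x ^ 2) ^ m := pow_le_pow_right₀ (by nlinarith [sq_nonneg x]) hjm

lemma key_integrable {s : ℝ} {ψ : ℝ → ℂ} (hψ : MemL2s s ψ) {t : ℝ} (ht : 2 * t - s < -(1/2)) :
    Integrable (fun x : ℝ => (1 + x ^ 2) ^ t * ‖ψ x‖) := by
  have hmeas : Measurable ψ := hψ.1
  have hb : ∀ x : ℝ, (0:ℝ) < 1 + x ^ 2 := fun x => by positivity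
  set f : ℝ → ℝ := fun x => (1 + x ^ 2) ^ (s/2) * ‖ψ x‖ with hf_def
  set φ : ℝ → ℝ := fun x => (1 + x ^ 2) ^ (t - s/2) with hφ_def
  have hfm : AEStronglyMeasurable f volume := by
    apply Measurable.aestronglyMeasurable
    fun_prop
  have hφm : AEStronglyMeasurable φ volume := by
    apply Measurable.aestronglyMeasurable
    fun_prop
  have hf2 : MemLp f 2 volume := by
    rw [memLp_two_iff_integrable_sq hfm]
    refine hψ.2.congr (Eventually.of_forall fun x => ?_)
    simp only [hf_def, mul_pow]
    congr 1
    rw [← Real.rpow_natCast ((1 + x ^ 2) ^ (s/2)) 2, ← Real.rpow_mul (hb x).le]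
    norm_num
  have hφ2 : MemLp φ 2 volume := by
    rw [memLp_two_iff_integrable_sq hφm]
    refine (integrable_weight (u := 2*t - s) ht).congr (Eventually.of_forall fun x => ?_)
    simp only [hφ_def]
    rw [← Real.rpow_natCast ((1 + x ^ 2) ^ (t - s/2)) 2, ← Real.rpow_mul (hb x).le]
    ring_nf
  have hpqr : (1 : ℝ≥0∞) / 1 = 1 / 2 + 1 / 2 := by
    rw [ENNReal.div_add_div_same]
    norm_num
    rw [ENNReal.div_self] <;> norm_num
  have hmul : Integrable (φ • f) volume := by
    rw [← memLp_one_iff_integrable]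
    exact hf2.smul hφ2
  refine hmul.congr (Eventually.of_forall fun x => ?_)
  show φ x * f x = _
  simp only [hf_def, hφ_def]
  rw [← mul_assoc, ← Real.rpow_add (hb x)]
  ring_nf


set_option maxHeartbeats 1000000

/-- If `ψ ∈ L^{2,s}(ℝ)` with `s > max{2(m−1), m} + 1/2` satisfies
`ψ̂(k) = O(k^m)` as `k → 0`, then the first `m` moments of `ψ` vanish:
`∫ x^j ψ(x) dx = 0` for `j = 0, 1, …, m−1`. -/
theorem stmt9 (m : ℕ) (hm : 1 ≤ m) (s : ℝ)
    (hs : s > max (2 * ((m : ℝ) - 1)) (m : ℝ) + 1 / 2)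
    (ψ : ℝ → ℂ) (hψ : MemL2s s ψ)
    (hO : ∃ δ > (0 : ℝ), ∃ C ≥ (0 : ℝ), ∀ k : ℝ, 0 < |k| → |k| < δ →
      ‖FT ψ k‖ ≤ C * |k| ^ m) :
    ∀ j < m, ∫ x : ℝ, (x : ℂ) ^ j * ψ x = 0 := by
  obtain ⟨δ, hδ, C, hC, hO⟩ := hO
  have hmeas : Measurable ψ := hψ.1
  have hbpos : ∀ x : ℝ, (0:ℝ) < 1 + x ^ 2 := fun x => by positivity
  have hsm : ((m:ℝ) + 1/2) < s := by
    have := le_max_right (2 * ((m : ℝ) - 1)) (m : ℝ)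
    linarith
  -- the dominating weight
  have hw : Integrable (fun x : ℝ => (1 + x ^ 2) ^ ((m:ℝ)/2) * ‖ψ x‖) :=
    key_integrable hψ (by push_cast; linarith)
  have hwb : ∀ (j : ℕ), j ≤ m → ∀ x : ℝ, |x| ^ j * ‖ψ x‖ ≤ (1 + x ^ 2) ^ ((m:ℝ)/2) * ‖ψ x‖ := by
    intro j hj x
    exact mul_le_mul_of_nonneg_right (abs_pow_le x hj) (norm_nonneg _)
  -- integrability of moments
  have hmom : ∀ j, j ≤ m → Integrable (fun x : ℝ => (x:ℂ) ^ j * ψ x) := by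
    intro j hj
    refine hw.mono' (Measurable.aestronglyMeasurable (by fun_prop)) (Eventually.of_forall fun x => ?_)
    rw [norm_mul, norm_pow, Complex.norm_real, Real.norm_eq_abs]
    exact hwb j hj x
  -- integrability of |x|^m ‖ψ x‖
  have hAint : Integrable (fun x : ℝ => |x| ^ m * ‖ψ x‖) := by
    refine hw.mono' (Measurable.aestronglyMeasurable (by fun_prop)) (Eventually.of_forall fun x => ?_)
    rw [Real.norm_eq_abs, abs_of_nonneg (by positivity)]
    exact hwb m le_rfl x
  have hexpnorm : ∀ (k x : ℝ), ‖Complex.exp (-(Complex.I * (k:ℂ) * (x:ℂ)))‖ = 1 := by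
    intro k x
    rw [Complex.norm_exp]
    simp
  -- integrability of exponential integrand
  have hexp : ∀ k : ℝ, Integrable (fun x : ℝ => Complex.exp (-(Complex.I * (k:ℂ) * (x:ℂ))) * ψ x) := by
    intro k
    refine hw.mono' (Measurable.aestronglyMeasurable (by fun_prop)) (Eventually.of_forall fun x => ?_)
    rw [norm_mul, hexpnorm, one_mul]
    calc ‖ψ x‖ = 1 * ‖ψ x‖ := (one_mul _).symm
      _ ≤ (1 + x ^ 2) ^ ((m:ℝ)/2) * ‖ψ x‖ := by
          gcongr
          exact Real.one_le_rpow (by nlinarith [sq_nonneg x]) (by positivity)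
  set M : ℕ → ℂ := fun i => ∫ x : ℝ, (x:ℂ) ^ i * ψ x with hM_def
  set T : ℝ → ℂ := fun k => ∫ x : ℝ, Complex.exp (-(Complex.I * (k:ℂ) * (x:ℂ))) * ψ x with hT_def
  set R : ℝ → ℂ := fun k => ∫ x : ℝ,
      (Complex.exp (-(Complex.I * (k:ℂ) * (x:ℂ)))
        - ∑ i ∈ Finset.range m, (-(Complex.I * (k:ℂ) * (x:ℂ))) ^ i / i.factorial) * ψ x with hR_def
  have hfac : ∀ (k : ℝ) (x : ℝ) (i : ℕ),
      (-(Complex.I * (k:ℂ) * (x:ℂ))) ^ i = (-(Complex.I * (k:ℂ))) ^ i * (x:ℂ) ^ i := by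
    intro k x i
    rw [show (-(Complex.I * (k:ℂ) * (x:ℂ))) = (-(Complex.I * (k:ℂ))) * (x:ℂ) by ring, mul_pow]
  have hsum_int : ∀ k : ℝ, Integrable (fun x : ℝ =>
      (∑ i ∈ Finset.range m, (-(Complex.I * (k:ℂ) * (x:ℂ))) ^ i / i.factorial) * ψ x) := by
    intro k
    have he : (fun x : ℝ => (∑ i ∈ Finset.range m, (-(Complex.I * (k:ℂ) * (x:ℂ))) ^ i / i.factorial) * ψ x)
        = fun x : ℝ => ∑ i ∈ Finset.range m,
            ((-(Complex.I * (k:ℂ))) ^ i / i.factorial) * ((x:ℂ) ^ i * ψ x) := by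
      funext x
      rw [Finset.sum_mul]
      refine Finset.sum_congr rfl fun i _ => ?_
      rw [hfac k x i]; ring
    rw [he]
    exact integrable_finset_sum _ fun i hi =>
      ((hmom i (Finset.mem_range.1 hi).le).const_mul _)
  -- the key identity
  have hid : ∀ k : ℝ, T k
      = (∑ i ∈ Finset.range m, ((-(Complex.I * (k:ℂ))) ^ i / i.factorial) * M i) + R k := by
    intro k
    have e1 : R k = T k - ∫ x : ℝ,
        (∑ i ∈ Finset.range m, (-(Complex.I * (k:ℂ) * (x:ℂ))) ^ i / i.factorial) * ψ x := by
      rw [hR_def, hT_def]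
      rw [← integral_sub (hexp k) (hsum_int k)]
      refine integral_congr_ae (Eventually.of_forall fun x => ?_)
      ring
    have e2 : (∫ x : ℝ, (∑ i ∈ Finset.range m, (-(Complex.I * (k:ℂ) * (x:ℂ))) ^ i / i.factorial) * ψ x)
        = ∑ i ∈ Finset.range m, ((-(Complex.I * (k:ℂ))) ^ i / i.factorial) * M i := by
      have he : (fun x : ℝ => (∑ i ∈ Finset.range m, (-(Complex.I * (k:ℂ) * (x:ℂ))) ^ i / i.factorial) * ψ x)
          = fun x : ℝ => ∑ i ∈ Finset.range m,
              ((-(Complex.I * (k:ℂ))) ^ i / i.factorial) * ((x:ℂ) ^ i * ψ x) := by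
        funext x
        rw [Finset.sum_mul]
        refine Finset.sum_congr rfl fun i _ => ?_
        rw [hfac k x i]; ring
      rw [he, integral_finset_sum _ fun i hi => ((hmom i (Finset.mem_range.1 hi).le).const_mul _)]
      refine Finset.sum_congr rfl fun i _ => ?_
      rw [MeasureTheory.integral_const_mul]
    rw [e1, e2]
    ring
  -- remainder bound
  set A : ℝ := ∫ x : ℝ, |x| ^ m * ‖ψ x‖ with hA_def
  have hA0 : 0 ≤ A := integral_nonneg fun x => by positivity
  have hRbd : ∀ k : ℝ, ‖R k‖ ≤ ((m:ℝ) + 2) * |k| ^ m * A := by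
    intro k
    have hg : Integrable (fun x : ℝ => ((m:ℝ) + 2) * |k| ^ m * (|x| ^ m * ‖ψ x‖)) :=
      hAint.const_mul _
    have hbd : ∀ x : ℝ, ‖(Complex.exp (-(Complex.I * (k:ℂ) * (x:ℂ)))
        - ∑ i ∈ Finset.range m, (-(Complex.I * (k:ℂ) * (x:ℂ))) ^ i / i.factorial) * ψ x‖
        ≤ ((m:ℝ) + 2) * |k| ^ m * (|x| ^ m * ‖ψ x‖) := by
      intro x
      rw [norm_mul]
      have hz : ‖(-(Complex.I * (k:ℂ) * (x:ℂ)))‖ = |k| * |x| := by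
        rw [norm_neg, norm_mul, norm_mul, Complex.norm_I, Complex.norm_real, Complex.norm_real,
          Real.norm_eq_abs, Real.norm_eq_abs, one_mul]
      have h1 := exp_taylor_bd (z := -(Complex.I * (k:ℂ) * (x:ℂ)))
        (by rw [hexpnorm]) hm
      rw [hz] at h1
      calc ‖Complex.exp (-(Complex.I * (k:ℂ) * (x:ℂ)))
            - ∑ i ∈ Finset.range m, (-(Complex.I * (k:ℂ) * (x:ℂ))) ^ i / i.factorial‖ * ‖ψ x‖
          ≤ (((m:ℝ) + 2) * (|k| * |x|) ^ m) * ‖ψ x‖ :=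
            mul_le_mul_of_nonneg_right h1 (norm_nonneg _)
        _ = ((m:ℝ) + 2) * |k| ^ m * (|x| ^ m * ‖ψ x‖) := by rw [mul_pow]; ring
    have := norm_integral_le_of_norm_le hg (Eventually.of_forall hbd)
    rw [hR_def]
    refine this.trans ?_
    rw [MeasureTheory.integral_const_mul]
  -- norm of the constant in FT
  set c0 : ℝ := (2 * Real.pi) ^ (-(1 : ℝ) / 2) with hc0_def
  have hc0 : 0 < c0 := Real.rpow_pos_of_pos (by positivity) _
  have hTbd : ∀ k : ℝ, 0 < |k| → |k| < δ → ‖T k‖ ≤ (C / c0) * |k| ^ m := by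
    intro k hk0 hkδ
    have h1 := hO k hk0 hkδ
    have h2 : ‖FT ψ k‖ = c0 * ‖T k‖ := by
      rw [FT, norm_mul, Complex.norm_real, Real.norm_eq_abs, abs_of_pos hc0, hT_def]
    rw [h2] at h1
    rw [div_mul_eq_mul_div, le_div_iff₀ hc0, mul_comm (‖T k‖) c0]
    exact h1
  -- main induction
  have key : ∀ j, j < m → M j = 0 := by
    intro j
    induction j using Nat.strong_induction_on with
    | _ j IH =>
      intro hjm
      set B : ℝ := ∑ i ∈ Finset.Ico (j+1) m, ‖M i‖ with hB_def
      have hB0 : 0 ≤ B := Finset.sum_nonneg fun i _ => norm_nonneg _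
      set K : ℝ := C / c0 + B + ((m:ℝ) + 2) * A with hK_def
      have hK0 : 0 ≤ K := by positivity
      have hest : ∀ k : ℝ, 0 < |k| → |k| < min δ 1 → ‖M j‖ ≤ (j.factorial : ℝ) * K * |k| := by
        intro k hk0 hk1
        have hkδ : |k| < δ := lt_of_lt_of_le hk1 (min_le_left _ _)
        have hk_le1 : |k| ≤ 1 := (lt_of_lt_of_le hk1 (min_le_right _ _)).le
        -- split the sum
        have hsplit : ∑ i ∈ Finset.range m, ((-(Complex.I * (k:ℂ))) ^ i / i.factorial) * M i
            = ((-(Complex.I * (k:ℂ))) ^ j / j.factorial) * M j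
              + ∑ i ∈ Finset.Ico (j+1) m, ((-(Complex.I * (k:ℂ))) ^ i / i.factorial) * M i := by
          rw [Finset.range_eq_Ico, ← Finset.sum_Ico_consecutive _ (Nat.zero_le (j+1)) hjm]
          congr 1
          rw [← Finset.range_eq_Ico, Finset.sum_range_succ]
          have hz : ∀ i ∈ Finset.range j,
              ((-(Complex.I * (k:ℂ))) ^ i / i.factorial) * M i = 0 := fun i hi => by
            rw [IH i (Finset.mem_range.1 hi) (lt_trans (Finset.mem_range.1 hi) hjm), mul_zero]
          rw [Finset.sum_eq_zero hz, zero_add]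
        have hterm : ((-(Complex.I * (k:ℂ))) ^ j / j.factorial) * M j
            = T k - (∑ i ∈ Finset.Ico (j+1) m, ((-(Complex.I * (k:ℂ))) ^ i / i.factorial) * M i)
              - R k := by
          rw [hid k, hsplit]; ring
        have hIk : ‖(-(Complex.I * (k:ℂ)))‖ = |k| := by
          rw [norm_neg, norm_mul, Complex.norm_I, Complex.norm_real, Real.norm_eq_abs, one_mul]
        have hnt : ‖((-(Complex.I * (k:ℂ))) ^ j / j.factorial) * M j‖
            = |k| ^ j / (j.factorial : ℝ) * ‖M j‖ := by
          rw [norm_mul, norm_div, norm_pow, hIk, Complex.norm_natCast]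
        -- bound the middle sum
        have hS : ‖∑ i ∈ Finset.Ico (j+1) m, ((-(Complex.I * (k:ℂ))) ^ i / i.factorial) * M i‖
            ≤ B * |k| ^ (j+1) := by
          refine (norm_sum_le _ _).trans ?_
          rw [hB_def, Finset.sum_mul]
          refine Finset.sum_le_sum fun i hi => ?_
          rw [norm_mul, norm_div, norm_pow, hIk, Complex.norm_natCast]
          have h5 : |k| ^ i ≤ |k| ^ (j+1) :=
            pow_le_pow_of_le_one (abs_nonneg k) hk_le1 (Finset.mem_Ico.1 hi).1
          have h6 : (1:ℝ) ≤ (i.factorial : ℝ) := by exact_mod_cast i.factorial_pos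
          calc |k| ^ i / (i.factorial : ℝ) * ‖M i‖ ≤ |k| ^ i * ‖M i‖ := by
                apply mul_le_mul_of_nonneg_right _ (norm_nonneg _)
                exact div_le_self (by positivity) h6
            _ ≤ |k| ^ (j+1) * ‖M i‖ := mul_le_mul_of_nonneg_right h5 (norm_nonneg _)
            _ = ‖M i‖ * |k| ^ (j+1) := by ring
        have hkm : |k| ^ m ≤ |k| ^ (j+1) :=
          pow_le_pow_of_le_one (abs_nonneg k) hk_le1 hjm
        have hmain : |k| ^ j / (j.factorial : ℝ) * ‖M j‖ ≤ K * |k| ^ (j+1) := by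
          rw [← hnt, hterm]
          calc ‖T k - _ - R k‖ ≤ ‖T k‖
              + ‖∑ i ∈ Finset.Ico (j+1) m, ((-(Complex.I * (k:ℂ))) ^ i / i.factorial) * M i‖
              + ‖R k‖ := by
                refine (norm_sub_le _ _).trans ?_
                gcongr
                exact norm_sub_le _ _
            _ ≤ (C / c0) * |k| ^ m + B * |k| ^ (j+1) + ((m:ℝ) + 2) * |k| ^ m * A :=
                add_le_add (add_le_add (hTbd k hk0 hkδ) hS) (hRbd k)
            _ ≤ K * |k| ^ (j+1) := by
                rw [hK_def]
                have h7 : (C / c0) * |k| ^ m ≤ (C / c0) * |k| ^ (j+1) := by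
                  apply mul_le_mul_of_nonneg_left hkm (by positivity)
                have h8 : ((m:ℝ) + 2) * |k| ^ m * A ≤ ((m:ℝ) + 2) * A * |k| ^ (j+1) := by
                  calc ((m:ℝ) + 2) * |k| ^ m * A ≤ ((m:ℝ) + 2) * |k| ^ (j+1) * A := by
                        apply mul_le_mul_of_nonneg_right _ hA0
                        apply mul_le_mul_of_nonneg_left hkm (by positivity)
                    _ = ((m:ℝ) + 2) * A * |k| ^ (j+1) := by ring
                nlinarith
        -- cancel |k|^j
        have hpj : (0:ℝ) < |k| ^ j := pow_pos hk0 j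
        have hfj : (0:ℝ) < (j.factorial : ℝ) := by exact_mod_cast j.factorial_pos
        have h9 : |k| ^ j * ‖M j‖ ≤ |k| ^ j * ((j.factorial : ℝ) * K * |k|) := by
          have h10 := mul_le_mul_of_nonneg_left hmain hfj.le
          calc |k| ^ j * ‖M j‖
              = (j.factorial : ℝ) * (|k| ^ j / (j.factorial : ℝ) * ‖M j‖) := by
                field_simp
                try ring
            _ ≤ (j.factorial : ℝ) * (K * |k| ^ (j+1)) := h10
            _ = |k| ^ j * ((j.factorial : ℝ) * K * |k|) := by rw [pow_succ]; ring
        exact le_of_mul_le_mul_left h9 hpj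
      -- conclude M j = 0
      rw [← norm_eq_zero]
      by_contra hne
      have hpos : 0 < ‖M j‖ := lt_of_le_of_ne (norm_nonneg _) (Ne.symm hne)
      set ε := ‖M j‖ with hε
      set D : ℝ := (j.factorial : ℝ) * K with hD
      have hD0 : 0 ≤ D := mul_nonneg (Nat.cast_nonneg _) hK0
      set k : ℝ := min (min δ 1 / 2) (ε / (2 * (D + 1))) with hk_def
      have hminpos : 0 < min δ 1 := lt_min hδ one_pos
      have hkpos : 0 < k :=
        lt_min (by linarith) (div_pos hpos (by linarith))
      have habs : |k| = k := abs_of_pos hkpos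
      have hlt : |k| < min δ 1 := by
        rw [habs]
        calc k ≤ min δ 1 / 2 := min_le_left _ _
          _ < min δ 1 := by linarith
      have h11 := hest k (by rw [habs]; exact hkpos) hlt
      rw [habs] at h11
      have h12 : k ≤ ε / (2 * (D + 1)) := min_le_right _ _
      have h13 : D * k ≤ D * (ε / (2 * (D + 1))) := mul_le_mul_of_nonneg_left h12 hD0
      have h14 : D * (ε / (2 * (D + 1))) < ε := by
        have h2d : (0:ℝ) < 2 * (D + 1) := by linarith
        have heq : D * (ε / (2 * (D + 1))) = D * ε / (2 * (D + 1)) := by ring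
        rw [heq, div_lt_iff₀ h2d]
        nlinarith
      have : ε < ε := lt_of_le_of_lt (h11.trans h13) h14
      exact lt_irrefl _ this
  intro j hj
  exact key j hj
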